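/- arXiv:math/0604573 — 2 statements merged into one kernel-verified Lean document; each statement's English description precedes it below -/
import Mathlib

section
/- Suppose X₁,…,X_m ∈ S^n are positive definite and satisfy H₀ - Σ_{i=1}^m X_i ⪰ 0 and X_i ⪰ H_i X_i^{-1} H_i for all i. Then the block arrowhead matrix J with (0,0)-block H₀ - (1/2)Σ X_i, (0,i)- and (i,0)-blocks (1/2)H_i, diagonal blocks (1/2)X_i, and zero off-diagonal blocks elsewhere, is positive semidefinite. -/
open Matrix

lemma psd_add {k : ℕ} {A B : Matrix (Fin k) (Fin k) ℝ} (hA : A.PosSemidef) (hB : B.PosSemidef) :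
    (A + B).PosSemidef := by
  refine ⟨hA.1.add hB.1, fun x => ?_⟩
  have := add_nonneg (hA.2 x) (hB.2 x)
  simpa [mul_add, add_mul, Finsupp.sum_add] using this

lemma psd_smul {k : ℕ} {A : Matrix (Fin k) (Fin k) ℝ} (hA : A.PosSemidef) {c : ℝ} (hc : 0 ≤ c) :
    (c • A).PosSemidef := by
  refine ⟨?_, fun x => ?_⟩
  · unfold Matrix.IsHermitian
    rw [conjTranspose_smul]
    rw [hA.1]
    simp
  · have := mul_nonneg hc (hA.2 x)
    exact (hA.smul hc).2 x

lemma psd_sum {k : ℕ} {ι : Type*} (s : Finset ι) (f : ι → Matrix (Fin k) (Fin k) ℝ)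
    (hf : ∀ i ∈ s, (f i).PosSemidef) : (∑ i ∈ s, f i).PosSemidef := by
  classical
  induction s using Finset.induction with
  | empty => simpa using Matrix.PosSemidef.zero
  | insert _ _ hni ih =>
    rw [Finset.sum_insert hni]
    exact psd_add (hf _ (by simp)) (ih fun i hi => hf i (by simp [hi]))

lemma quad_blockDiagonal {k l : ℕ} (M : Fin l → Matrix (Fin k) (Fin k) ℝ)
    (x : Fin k × Fin l → ℝ) :
    x ⬝ᵥ (blockDiagonal M) *ᵥ x = ∑ j : Fin l, (fun i => x (i, j)) ⬝ᵥ (M j) *ᵥ (fun i => x (i, j)) := by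
  simp only [dotProduct, mulVec, Fintype.sum_prod_type, blockDiagonal_apply]
  rw [Finset.sum_comm]
  refine Finset.sum_congr rfl fun j _ => ?_
  refine Finset.sum_congr rfl fun i _ => ?_
  simp [mul_ite, Finset.mul_sum]

lemma pd_smul {k : ℕ} {A : Matrix (Fin k) (Fin k) ℝ} (hA : A.PosDef) {c : ℝ} (hc : 0 < c) :
    (c • A).PosDef := by
  refine ⟨?_, fun x hx => ?_⟩
  · unfold Matrix.IsHermitian
    rw [conjTranspose_smul, hA.1]
    simp
  · exact (hA.smul hc).2 hx

lemma pd_blockDiagonal {k l : ℕ} (M : Fin l → Matrix (Fin k) (Fin k) ℝ)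
    (hM : ∀ j, (M j).PosDef) : (blockDiagonal M).PosDef := by
  refine PosDef.of_dotProduct_mulVec_pos ?_ fun x hx => ?_
  · unfold Matrix.IsHermitian
    rw [blockDiagonal_conjTranspose]
    exact congrArg _ (funext fun j => (hM j).1)
  · rw [star_trivial, quad_blockDiagonal]
    obtain ⟨p, hij⟩ := Function.ne_iff.mp hx
    obtain ⟨i, j⟩ := p
    refine Finset.sum_pos' (fun a _ => ?_) ⟨j, Finset.mem_univ _, ?_⟩
    · simpa using (hM a).posSemidef.dotProduct_mulVec_nonneg (fun i => x (i, a))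
    · simpa using (hM j).dotProduct_mulVec_pos (x := fun i => x (i, j)) (fun h => hij (congrFun h i))

lemma inv_blockDiag {k l : ℕ} (M : Fin l → Matrix (Fin k) (Fin k) ℝ)
    (hM : ∀ j, (M j).PosDef) :
    (blockDiagonal M)⁻¹ = blockDiagonal fun j => (M j)⁻¹ := by
  apply inv_eq_right_inv
  rw [← blockDiagonal_mul]
  have : (fun k => M k * (M k)⁻¹) = fun _ => (1 : Matrix (Fin k) (Fin k) ℝ) := by
    funext j
    exact Matrix.mul_nonsing_inv _ ((Matrix.isUnit_iff_isUnit_det _).mp (hM j).isUnit)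
  rw [this]
  exact blockDiagonal_one

lemma B_bd_Bt {k l : ℕ} (C E : Fin l → Matrix (Fin k) (Fin k) ℝ)
    (B : Matrix (Fin k) (Fin k × Fin l) ℝ) (hB : ∀ a p, B a p = C p.2 a p.1) :
    B * blockDiagonal E * Bᵀ = ∑ j : Fin l, C j * E j * (C j)ᵀ := by
  ext a b
  simp only [mul_apply, transpose_apply, hB, blockDiagonal_apply, Fintype.sum_prod_type,
    Finset.sum_apply, mul_ite, mul_zero, ite_mul, zero_mul, Finset.sum_ite_eq,
    Finset.mem_univ, if_true, Finset.sum_mul, Finset.mul_sum]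
  simp only [Finset.sum_ite_eq', Finset.mem_univ, if_true, Matrix.sum_apply]
  refine Finset.sum_comm.trans (Finset.sum_congr rfl fun j _ => ?_)
  simp only [mul_apply, transpose_apply, Finset.sum_mul]

theorem arrowhead_posSemidef {n m : ℕ}
    (H₀ : Matrix (Fin n) (Fin n) ℝ) (H X : Fin m → Matrix (Fin n) (Fin n) ℝ)
    (h0 : H₀.IsSymm) (hH : ∀ i, (H i).IsSymm) (hX : ∀ i, (X i).IsSymm)
    (hXpd : ∀ i, (X i).PosDef)
    (h1 : (H₀ - ∑ i : Fin m, X i).PosSemidef)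
    (h2 : ∀ i, (X i - H i * (X i)⁻¹ * H i).PosSemidef)
    (B : Matrix (Fin n) (Fin n × Fin m) ℝ)
    (hB : ∀ a p, B a p = ((1 / 2 : ℝ) • H p.2) a p.1) :
    (Matrix.fromBlocks (H₀ - (1 / 2 : ℝ) • ∑ i : Fin m, X i) B Bᵀ
        (Matrix.blockDiagonal fun i : Fin m => (1 / 2 : ℝ) • X i)).PosSemidef := by
  have hhalf : ∀ i, ((1 / 2 : ℝ) • X i).PosDef := fun i => pd_smul (hXpd i) (by norm_num)
  have hD : (blockDiagonal fun i : Fin m => (1 / 2 : ℝ) • X i).PosDef := pd_blockDiagonal _ hhalf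
  haveI := hD.isUnit.invertible
  have hBH : Bᴴ = Bᵀ := by
    ext a b
    simp [conjTranspose_apply]
  rw [← hBH, Matrix.PosDef.fromBlocks₂₂ _ _ hD, hBH]
  have hinv2 : ∀ i, ((1 / 2 : ℝ) • X i)⁻¹ = (2 : ℝ) • (X i)⁻¹ := by
    intro i
    apply inv_eq_right_inv
    rw [smul_mul_assoc, mul_smul_comm, smul_smul,
      Matrix.mul_nonsing_inv _ ((Matrix.isUnit_iff_isUnit_det _).mp (hXpd i).isUnit)]
    norm_num
  have hDinv : (blockDiagonal fun i : Fin m => (1 / 2 : ℝ) • X i)⁻¹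
      = blockDiagonal fun i => (2 : ℝ) • (X i)⁻¹ := by
    rw [inv_blockDiag _ hhalf]
    exact congrArg _ (funext hinv2)
  rw [hDinv, B_bd_Bt (fun i => (1 / 2 : ℝ) • H i) _ B hB]
  have heach : ∀ i : Fin m, ((1 / 2 : ℝ) • H i) * ((2 : ℝ) • (X i)⁻¹) * ((1 / 2 : ℝ) • H i)ᵀ
      = (1 / 2 : ℝ) • (H i * (X i)⁻¹ * H i) := by
    intro i
    rw [transpose_smul, (hH i).eq]
    simp only [smul_mul_assoc, mul_smul_comm, smul_smul]
    norm_num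
  rw [Finset.sum_congr rfl fun i _ => heach i]
  have key : (H₀ - (1 / 2 : ℝ) • ∑ i : Fin m, X i) - ∑ i : Fin m, (1 / 2 : ℝ) • (H i * (X i)⁻¹ * H i)
      = (H₀ - ∑ i : Fin m, X i) + ∑ i : Fin m, (1 / 2 : ℝ) • (X i - H i * (X i)⁻¹ * H i) := by
    simp only [smul_sub, Finset.sum_sub_distrib, ← Finset.smul_sum]
    module
  rw [key]
  exact psd_add h1 (psd_sum _ _ fun i _ => psd_smul (h2 i) (by norm_num))
end

section
/- Let L ∈ S^{n(m+1)} be positive semidefinite with block partition (L_{ij})_{0≤i,j≤m}, satisfying L_{ij} = L_{ji} (each block symmetric), L_{ii} = L_{00} for i ≥ 1, and rank(L) = rank(L_{00}). Then L can be written as L = Σ_{k=1}^p α_k v_k v_k^T where p = rank(L), α_k > 0, and each v_k has the form v_k = (1, λ_{1k}, …, λ_{mk}) ⊗ u_k with λ_{ik} ∈ {-1, 1} and unit vectors u_k ∈ ℝ^n. -/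
open Matrix

section AuxLemmas
variable {ι : Type*} [Fintype ι] [DecidableEq ι]

private lemma aux_AV (A : Matrix ι ι ℝ) (hA : A.IsHermitian) :
    A * (hA.eigenvectorUnitary : Matrix ι ι ℝ)
      = (hA.eigenvectorUnitary : Matrix ι ι ℝ) * diagonal hA.eigenvalues := by
  have h1 : star (hA.eigenvectorUnitary : Matrix ι ι ℝ) * (hA.eigenvectorUnitary : Matrix ι ι ℝ) = 1 :=
    Unitary.coe_star_mul_self hA.eigenvectorUnitary
  calc A * (hA.eigenvectorUnitary : Matrix ι ι ℝ)
      = (hA.eigenvectorUnitary : Matrix ι ι ℝ) * diagonal (RCLike.ofReal ∘ hA.eigenvalues)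
          * (star (hA.eigenvectorUnitary : Matrix ι ι ℝ) * (hA.eigenvectorUnitary : Matrix ι ι ℝ)) := by
        have hs := hA.spectral_theorem
        rw [Unitary.conjStarAlgAut_apply] at hs
        rw [← mul_assoc, ← hs]
    _ = (hA.eigenvectorUnitary : Matrix ι ι ℝ) * diagonal hA.eigenvalues := by
        rw [h1, mul_one]
        congr 1

private lemma aux_star_eq_transpose {κ : Type*} (A : Matrix κ κ ℝ) : star A = Aᵀ := by
  ext a b; simp [Matrix.star_apply]

private lemma aux_VtV (A : Matrix ι ι ℝ) (hA : A.IsHermitian) :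
    (hA.eigenvectorUnitary : Matrix ι ι ℝ)ᵀ * (hA.eigenvectorUnitary : Matrix ι ι ℝ) = 1 := by
  rw [← aux_star_eq_transpose]
  exact Unitary.coe_star_mul_self hA.eigenvectorUnitary

private lemma aux_VVt (A : Matrix ι ι ℝ) (hA : A.IsHermitian) :
    (hA.eigenvectorUnitary : Matrix ι ι ℝ) * (hA.eigenvectorUnitary : Matrix ι ι ℝ)ᵀ = 1 := by
  rw [← aux_star_eq_transpose]
  exact Unitary.coe_mul_star_self hA.eigenvectorUnitary

private lemma aux_entry (A : Matrix ι ι ℝ) (hA : A.IsHermitian) (q q' : ι) :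
    A q q' = ∑ i, hA.eigenvalues i *
      ((hA.eigenvectorUnitary : Matrix ι ι ℝ) q i * (hA.eigenvectorUnitary : Matrix ι ι ℝ) q' i) := by
  have h2 : A = ((hA.eigenvectorUnitary : Matrix ι ι ℝ) * diagonal hA.eigenvalues)
      * (hA.eigenvectorUnitary : Matrix ι ι ℝ)ᵀ := by
    rw [← aux_AV A hA, mul_assoc, aux_VVt A hA, mul_one]
  conv_lhs => rw [h2]
  rw [Matrix.mul_apply]
  exact Finset.sum_congr rfl fun i _ => by rw [Matrix.mul_diagonal, Matrix.transpose_apply]; ring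

private lemma aux_sum_prod {R : Type*} [Ring R] :
    ∀ (m : ℕ) (f : Fin m → Bool → R),
      ∑ s : Fin m → Bool, ((List.finRange m).map (fun i => f i (s i))).prod
        = ((List.finRange m).map (fun i => f i true + f i false)).prod := by
  intro m
  induction m with
  | zero => intro f; simp
  | succ m ih =>
    intro f
    rw [Fintype.sum_equiv ((Fin.consEquiv (fun _ : Fin (m+1) => Bool)).symm)
      _ (fun bt : Bool × (Fin m → Bool) => f 0 bt.1 * ((List.finRange m).map (fun i => f i.succ (bt.2 i))).prod)
      (by
        intro s
        rw [List.finRange_succ, List.map_cons, List.prod_cons, List.map_map]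
        rfl)]
    rw [Fintype.sum_prod_type]
    simp only [← Finset.mul_sum, ← Finset.sum_mul]
    rw [ih (fun i b => f i.succ b)]
    rw [List.finRange_succ, List.map_cons, List.prod_cons, List.map_map]
    simp only [Fintype.sum_bool, add_comm]
    rfl

private lemma aux_mul_list_prod {R : Type*} [Ring R] [Module ℝ R] [SMulCommClass ℝ R R]
    [IsScalarTower ℝ R R] {ι' : Type*} :
    ∀ (l : List ι') (g : ι' → R) (B : R) (j : ι') (c : ℝ), j ∈ l →
      B * g j = c • g j → (∀ i ∈ l, B * g i = g i * B) →
      B * (l.map g).prod = c • (l.map g).prod := by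
  intro l
  induction l with
  | nil => intro g B j c hj; simp at hj
  | cons a t ih =>
    intro g B j c hj hBj hcomm
    rw [List.map_cons, List.prod_cons, ← mul_assoc]
    rcases List.mem_cons.mp hj with h | h
    · subst h
      rw [hBj, smul_mul_assoc]
    · rw [hcomm a (List.mem_cons_self), mul_assoc,
        ih g B j c h hBj (fun i hi => hcomm i (List.mem_cons_of_mem _ hi)), mul_smul_comm]

private lemma aux_nu_inj : ∀ (m : ℕ) (s s' : Fin m → Bool),
    (∑ i : Fin m, if s i then 3 ^ (i : ℕ) else 0) =
      (∑ i : Fin m, if s' i then 3 ^ (i : ℕ) else 0 : ℕ) → s = s' := by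
  intro m
  induction m with
  | zero => intro s s' _; funext i; exact absurd i.2 (by omega)
  | succ m ih =>
    intro s s' h
    rw [Fin.sum_univ_succ, Fin.sum_univ_succ] at h
    have key : ∀ t : Fin (m+1) → Bool,
        (∑ i : Fin m, if t i.succ then 3 ^ (i.succ : ℕ) else 0) =
          3 * ∑ i : Fin m, if t i.succ then 3 ^ (i : ℕ) else 0 := by
      intro t
      rw [Finset.mul_sum]
      refine Finset.sum_congr rfl fun i _ => ?_
      rcases t i.succ with _ | _ <;> simp [pow_succ, mul_comm]
    rw [key s, key s'] at h
    have h0 : s 0 = s' 0 := by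
      rcases hs : s 0 <;> rcases hs' : s' 0 <;> simp [hs, hs'] at h ⊢ <;> omega
    have ht : (fun i : Fin m => s i.succ) = fun i => s' i.succ := by
      apply ih
      rcases hs : s 0 <;> rcases hs' : s' 0 <;> rw [hs, hs'] at h <;> simp at h <;> omega
    funext i
    rcases Fin.eq_zero_or_eq_succ i with rfl | ⟨j, rfl⟩
    · exact h0
    · exact congrFun ht j

private lemma aux_sum_mulVec {κ σ : Type*} [Fintype κ] [Fintype σ]
    (f : σ → Matrix κ κ ℝ) (v : κ → ℝ) :
    (∑ s, f s) *ᵥ v = ∑ s, f s *ᵥ v := by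
  funext t
  simp only [Matrix.mulVec, dotProduct, Matrix.sum_apply, Finset.sum_apply,
    Finset.sum_mul]
  rw [Finset.sum_comm]

end AuxLemmas

theorem rank_one_decomposition_of_dual_solution {n m : ℕ}
    (L : Matrix (Fin (m + 1) × Fin n) (Fin (m + 1) × Fin n) ℝ)
    (hL : L.PosSemidef)
    (hblocksymm : ∀ (i j : Fin (m + 1)) (a b : Fin n), L (i, a) (j, b) = L (j, a) (i, b))
    (hdiag : ∀ (i : Fin (m + 1)) (a b : Fin n), L (i, a) (i, b) = L (0, a) (0, b))
    (hrank : L.rank = (Matrix.of fun a b : Fin n => L (0, a) (0, b)).rank) :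
    ∃ (α : Fin L.rank → ℝ) (lam : Fin m → Fin L.rank → ℝ) (u : Fin L.rank → Fin n → ℝ),
      (∀ k, 0 < α k) ∧
      (∀ i k, lam i k = 1 ∨ lam i k = -1) ∧
      (∀ k, ∑ a : Fin n, u k a ^ 2 = 1) ∧
      L = ∑ k : Fin L.rank, α k •
        Matrix.vecMulVec
          (fun q : Fin (m + 1) × Fin n => (Fin.cases 1 (fun i => lam i k) q.1 : ℝ) * u k q.2)
          (fun q : Fin (m + 1) × Fin n => (Fin.cases 1 (fun i => lam i k) q.1 : ℝ) * u k q.2) := by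
  classical
  have hA : L.IsHermitian := hL.1
  set p := L.rank with hp
  set V : Matrix (Fin (m+1) × Fin n) (Fin (m+1) × Fin n) ℝ :=
    (hA.eigenvectorUnitary : Matrix (Fin (m+1) × Fin n) (Fin (m+1) × Fin n) ℝ) with hVdef
  set μ : (Fin (m+1) × Fin n) → ℝ := hA.eigenvalues with hμdef
  have ecard : Fintype.card {i // μ i ≠ 0} = p := hA.rank_eq_card_non_zero_eigs.symm
  set e : Fin p ≃ {i // μ i ≠ 0} := (Fintype.equivFinOfCardEq ecard).symm with hedef
  set X : Matrix (Fin p) (Fin (m+1) × Fin n) ℝ :=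
    fun k q => Real.sqrt (μ (e k)) * V q (e k) with hXdef
  have hX : ∀ q q', L q q' = ∑ k : Fin p, X k q * X k q' := by
    intro q q'
    rw [aux_entry L hA q q']
    have h2 : ∑ k : Fin p, X k q * X k q'
        = ∑ t : {i // μ i ≠ 0}, μ t.1 * (V q t.1 * V q' t.1) := by
      rw [← Equiv.sum_comp e (fun t : {i // μ i ≠ 0} => μ t.1 * (V q t.1 * V q' t.1))]
      refine Finset.sum_congr rfl fun k _ => ?_
      have hnn : (0:ℝ) ≤ μ (e k).1 := hL.eigenvalues_nonneg _
      have hss : Real.sqrt (μ (e k).1) * Real.sqrt (μ (e k).1) = μ (e k).1 :=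
        Real.mul_self_sqrt hnn
      simp only [hXdef]
      calc Real.sqrt (μ (e k).1) * V q (e k).1 * (Real.sqrt (μ (e k).1) * V q' (e k).1)
          = (Real.sqrt (μ (e k).1) * Real.sqrt (μ (e k).1)) * (V q (e k).1 * V q' (e k).1) := by ring
        _ = μ (e k).1 * (V q (e k).1 * V q' (e k).1) := by rw [hss]
    have h3 : ∑ t : {i // μ i ≠ 0}, μ t.1 * (V q t.1 * V q' t.1)
        = ∑ i, μ i * (V q i * V q' i) := by
      rw [← Finset.sum_subtype (Finset.univ.filter fun i => μ i ≠ 0)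
        (by intro x; simp) (fun i => μ i * (V q i * V q' i))]
      exact Finset.sum_filter_of_ne (by intro x _ hx; contrapose! hx; simp [hx])
    rw [h2, h3]
  set Y : Fin (m+1) → Matrix (Fin p) (Fin n) ℝ := fun i => fun k a => X k (i, a) with hYdef
  have hL' : ∀ i j a b, L (i,a) (j,b) = ((Y i)ᵀ * Y j) a b := by
    intro i j a b; rw [hX (i,a) (j,b), Matrix.mul_apply]; rfl
  set U : Matrix (Fin p) (Fin n) ℝ := Y 0 with hUdef
  clear_value X Y U
  have hdiagM : ∀ i, (Y i)ᵀ * Y i = Uᵀ * U := by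
    intro i; ext a b
    calc ((Y i)ᵀ * Y i) a b = L (i,a) (i,b) := (hL' i i a b).symm
      _ = L (0,a) (0,b) := hdiag i a b
      _ = (Uᵀ * U) a b := by rw [hUdef]; exact hL' 0 0 a b
  have hsymM : ∀ i j, (Y i)ᵀ * Y j = (Y j)ᵀ * Y i := by
    intro i j; ext a b
    calc ((Y i)ᵀ * Y j) a b = L (i,a) (j,b) := (hL' i j a b).symm
      _ = L (j,a) (i,b) := hblocksymm i j a b
      _ = ((Y j)ᵀ * Y i) a b := hL' j i a b
  have hsymM0 : ∀ i, (Y i)ᵀ * U = Uᵀ * Y i := by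
    intro i; rw [hUdef]; exact hsymM i 0
  have hUrank : U.rank = p := by
    have h1 : Uᵀ * U = Matrix.of (fun a b : Fin n => L (0,a) (0,b)) := by
      ext a b
      show (Uᵀ * U) a b = L (0,a) (0,b)
      rw [hUdef]; exact (hL' 0 0 a b).symm
    rw [← Matrix.rank_transpose_mul_self U, h1]
    exact hrank.symm
  set G : Matrix (Fin p) (Fin p) ℝ := U * Uᵀ with hGdef
  have hGrank : G.rank = p := by rw [hGdef, Matrix.rank_self_mul_transpose]; exact hUrank
  clear_value G
  have hGu : IsUnit G := by
    have hGsurj : Function.Surjective G.mulVecLin := by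
      rw [← LinearMap.range_eq_top]
      apply Submodule.eq_top_of_finrank_eq
      rw [Module.finrank_fintype_fun_eq_card]
      simpa [Matrix.rank] using hGrank
    rw [← Matrix.mulVec_injective_iff_isUnit]
    show Function.Injective G.mulVec
    rw [← Matrix.coe_mulVecLin]
    exact LinearMap.injective_iff_surjective.mpr hGsurj
  have hGdetu : IsUnit G.det := (Matrix.isUnit_iff_isUnit_det G).mp hGu
  have hG1 : G * G⁻¹ = 1 := Matrix.mul_nonsing_inv G hGdetu
  have hG2 : G⁻¹ * G = 1 := Matrix.nonsing_inv_mul G hGdetu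
  have Rcancel : ∀ A B : Matrix (Fin p) (Fin p) ℝ, A * U = B * U → A = B := by
    intro A B h
    have h2 : A * G = B * G := by rw [hGdef, ← Matrix.mul_assoc, ← Matrix.mul_assoc, h]
    calc A = A * (G * G⁻¹) := by rw [hG1, Matrix.mul_one]
      _ = (A * G) * G⁻¹ := (Matrix.mul_assoc _ _ _).symm
      _ = (B * G) * G⁻¹ := by rw [h2]
      _ = B * (G * G⁻¹) := Matrix.mul_assoc _ _ _
      _ = B := by rw [hG1, Matrix.mul_one]
  have Lcancel : ∀ A B : Matrix (Fin p) (Fin n) ℝ, Uᵀ * A = Uᵀ * B → A = B := by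
    intro A B h
    have h2 : (U * Uᵀ) * A = (U * Uᵀ) * B := by rw [Matrix.mul_assoc, Matrix.mul_assoc, h]
    rw [← hGdef] at h2
    calc A = (G⁻¹ * G) * A := by rw [hG2, Matrix.one_mul]
      _ = G⁻¹ * (G * A) := Matrix.mul_assoc _ _ _
      _ = G⁻¹ * (G * B) := by rw [h2]
      _ = (G⁻¹ * G) * B := (Matrix.mul_assoc _ _ _).symm
      _ = B := by rw [hG2, Matrix.one_mul]
  set Pi0 : Matrix (Fin n) (Fin n) ℝ := Uᵀ * G⁻¹ * U with hPidef
  have hUPi : U * Pi0 = U := by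
    rw [hPidef, ← Matrix.mul_assoc, ← Matrix.mul_assoc, ← hGdef, hG1, Matrix.one_mul]
  clear_value Pi0
  have hYPi : ∀ i, Y i * Pi0 = Y i := by
    intro i
    have hTP : ((Y i)ᵀ * Y i) * Pi0 = (Y i)ᵀ * Y i := by
      rw [hdiagM i, Matrix.mul_assoc, hUPi]
    have hPT : Pi0ᵀ * ((Y i)ᵀ * Y i) = (Y i)ᵀ * Y i := by
      have hPU : Pi0ᵀ * Uᵀ = Uᵀ := by rw [← Matrix.transpose_mul, hUPi]
      rw [hdiagM i, ← Matrix.mul_assoc, hPU]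
    have e1 : (Y i * Pi0)ᵀ * (Y i * Pi0) = (Y i)ᵀ * Y i := by
      rw [Matrix.transpose_mul, Matrix.mul_assoc Pi0ᵀ (Y i)ᵀ (Y i * Pi0),
        ← Matrix.mul_assoc (Y i)ᵀ (Y i) Pi0, hTP, hPT]
    have e2 : (Y i * Pi0)ᵀ * Y i = (Y i)ᵀ * Y i := by
      rw [Matrix.transpose_mul, Matrix.mul_assoc, hPT]
    have e3 : (Y i)ᵀ * (Y i * Pi0) = (Y i)ᵀ * Y i := by
      rw [← Matrix.mul_assoc, hTP]
    have hz : (Y i * Pi0 - Y i)ᵀ * (Y i * Pi0 - Y i) = 0 := by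
      rw [Matrix.transpose_sub, Matrix.sub_mul, Matrix.mul_sub, Matrix.mul_sub, e1, e2, e3]
      simp
    have hzt : (Y i * Pi0 - Y i)ᴴ * (Y i * Pi0 - Y i) = 0 := by
      rwa [Matrix.conjTranspose_eq_transpose_of_trivial]
    have h0 := Matrix.conjTranspose_mul_self_eq_zero.mp hzt
    rwa [sub_eq_zero] at h0
  set M : Fin (m+1) → Matrix (Fin p) (Fin p) ℝ := fun i => Y i * Uᵀ * G⁻¹ with hMdef
  have hMU : ∀ i, M i * U = Y i := by
    intro i
    calc M i * U = Y i * Pi0 := by simp only [hMdef, hPidef, Matrix.mul_assoc]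
      _ = Y i := hYPi i
  have hM0 : M 0 = 1 := by
    simp only [hMdef, ← hUdef, ← hGdef, hG1]
  clear_value M
  have hMsym : ∀ i, (M i)ᵀ = M i := by
    intro i
    have h2 : Uᵀ * ((M i)ᵀ * U) = Uᵀ * (M i * U) := by
      calc Uᵀ * ((M i)ᵀ * U) = (M i * U)ᵀ * U := by rw [Matrix.transpose_mul, Matrix.mul_assoc]
        _ = (Y i)ᵀ * U := by rw [hMU i]
        _ = Uᵀ * Y i := hsymM0 i
        _ = Uᵀ * (M i * U) := by rw [hMU i]
    exact Rcancel _ _ (Lcancel _ _ h2)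
  have hMinv1 : ∀ i, (M i)ᵀ * M i = 1 := by
    intro i
    have h2 : Uᵀ * (((M i)ᵀ * M i) * U) = Uᵀ * ((1:Matrix (Fin p) (Fin p) ℝ) * U) := by
      calc Uᵀ * (((M i)ᵀ * M i) * U) = (M i * U)ᵀ * (M i * U) := by
            rw [Matrix.transpose_mul]; simp only [Matrix.mul_assoc]
        _ = (Y i)ᵀ * Y i := by rw [hMU i]
        _ = Uᵀ * U := hdiagM i
        _ = Uᵀ * ((1:Matrix (Fin p) (Fin p) ℝ) * U) := by rw [Matrix.one_mul]
    exact Rcancel _ _ (Lcancel _ _ h2)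
  have hMinv : ∀ i, M i * M i = 1 := by
    intro i
    nth_rewrite 1 [← hMsym i]
    exact hMinv1 i
  have hMcomm : ∀ i j, M i * M j = M j * M i := by
    intro i j
    have e1 : ∀ i j, Uᵀ * ((M i * M j) * U) = (Y i)ᵀ * Y j := by
      intro i j
      calc Uᵀ * ((M i * M j) * U) = (M i * U)ᵀ * (M j * U) := by
            rw [Matrix.transpose_mul, hMsym i]; simp only [Matrix.mul_assoc]
        _ = (Y i)ᵀ * Y j := by rw [hMU i, hMU j]
    have h2 : Uᵀ * ((M i * M j) * U) = Uᵀ * ((M j * M i) * U) := by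
      rw [e1 i j, e1 j i]; exact hsymM i j
    exact Rcancel _ _ (Lcancel _ _ h2)
  set Nm : Fin m → Matrix (Fin p) (Fin p) ℝ := fun j => M j.succ with hNdef
  have hNsym : ∀ j, (Nm j)ᵀ = Nm j := fun j => hMsym _
  have hNinv : ∀ j, Nm j * Nm j = 1 := fun j => hMinv _
  have hNcomm : ∀ i j, Nm i * Nm j = Nm j * Nm i := fun i j => hMcomm _ _
  clear_value Nm
  set A2 : Matrix (Fin p) (Fin p) ℝ := ∑ i : Fin m, ((3:ℝ)^(i:ℕ)) • Nm i with hA2def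
  have hA2herm : A2.IsHermitian := by
    show A2ᴴ = A2
    ext a b
    simp only [hA2def, Matrix.conjTranspose_apply, Matrix.sum_apply, Matrix.smul_apply,
      star_trivial, smul_eq_mul]
    refine Finset.sum_congr rfl fun i _ => ?_
    congr 1
    exact congrFun (congrFun (hNsym i) a) b
  set Q : Matrix (Fin p) (Fin p) ℝ := (hA2herm.eigenvectorUnitary : Matrix (Fin p) (Fin p) ℝ)ᵀ
    with hQdef
  set μ2 : Fin p → ℝ := hA2herm.eigenvalues with hμ2def
  have hQQ : Q * Qᵀ = 1 := by
    rw [hQdef, Matrix.transpose_transpose]; exact aux_VtV _ hA2herm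
  have hQtQ : Qᵀ * Q = 1 := by
    rw [hQdef, Matrix.transpose_transpose]; exact aux_VVt _ hA2herm
  have hAv : ∀ k, A2 *ᵥ (fun t => Q k t) = μ2 k • (fun t => Q k t) := by
    intro k
    funext t
    have h1 := congrFun (congrFun (aux_AV A2 hA2herm) t) k
    have lhs : (A2 * (hA2herm.eigenvectorUnitary : Matrix (Fin p) (Fin p) ℝ)) t k
        = (A2 *ᵥ (fun t => Q k t)) t := by
      simp [Matrix.mul_apply, Matrix.mulVec, dotProduct, hQdef]
    have rhs : ((hA2herm.eigenvectorUnitary : Matrix (Fin p) (Fin p) ℝ) * diagonal μ2) t k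
        = μ2 k * Q k t := by
      rw [Matrix.mul_diagonal]
      simp [hQdef, mul_comm]
    rw [Pi.smul_apply, smul_eq_mul, ← lhs, h1, rhs]
  clear_value A2 Q μ2
  set sgn : Bool → ℝ := fun b => if b then 1 else -1 with hsgndef
  have hsgnsq : ∀ b, sgn b * sgn b = 1 := by intro b; cases b <;> norm_num [hsgndef]
  set Pm : (Fin m → Bool) → Matrix (Fin p) (Fin p) ℝ :=
    fun s => ((List.finRange m).map (fun i => (2⁻¹:ℝ) • (1 + sgn (s i) • Nm i))).prod with hPmdef
  have hPsum : ∑ s : Fin m → Bool, Pm s = 1 := by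
    simp only [hPmdef]
    rw [aux_sum_prod m (fun i b => (2⁻¹:ℝ) • (1 + sgn b • Nm i))]
    apply List.prod_eq_one
    intro x hx
    obtain ⟨i, _, rfl⟩ := List.mem_map.mp hx
    have : ((1:Matrix (Fin p) (Fin p) ℝ) + sgn true • Nm i) + (1 + sgn false • Nm i)
        = (2:ℝ) • (1:Matrix (Fin p) (Fin p) ℝ) := by
      simp only [hsgndef]
      norm_num
      rw [two_smul]
      abel
    rw [← smul_add, this, smul_smul]
    norm_num
  have hNP : ∀ j s, Nm j * Pm s = sgn (s j) • Pm s := by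
    intro j s
    simp only [hPmdef]
    apply aux_mul_list_prod (List.finRange m) _ (Nm j) j (sgn (s j)) (List.mem_finRange j)
    · have key : Nm j + sgn (s j) • (1:Matrix (Fin p) (Fin p) ℝ)
          = sgn (s j) • (1 + sgn (s j) • Nm j) := by
        rw [smul_add, smul_smul, hsgnsq, one_smul, add_comm]
      calc Nm j * ((2⁻¹:ℝ) • (1 + sgn (s j) • Nm j))
          = (2⁻¹:ℝ) • (Nm j * (1 + sgn (s j) • Nm j)) := mul_smul_comm _ _ _
        _ = (2⁻¹:ℝ) • (Nm j + sgn (s j) • (1:Matrix (Fin p) (Fin p) ℝ)) := by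
            rw [mul_add, mul_one, mul_smul_comm, hNinv j]
        _ = (2⁻¹:ℝ) • (sgn (s j) • (1 + sgn (s j) • Nm j)) := by rw [key]
        _ = sgn (s j) • ((2⁻¹:ℝ) • (1 + sgn (s j) • Nm j)) := smul_comm _ _ _
    · intro i _
      rw [mul_smul_comm, smul_mul_assoc]
      congr 1
      rw [mul_add, add_mul, mul_one, one_mul, mul_smul_comm, smul_mul_assoc, hNcomm j i]
  set cs : (Fin m → Bool) → ℝ := fun s => ∑ i : Fin m, (3:ℝ)^(i:ℕ) * sgn (s i) with hcsdef
  have hA2P : ∀ s, A2 * Pm s = cs s • Pm s := by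
    intro s
    simp only [hA2def, hcsdef]
    rw [Finset.sum_mul, Finset.sum_smul]
    refine Finset.sum_congr rfl fun i _ => ?_
    rw [smul_mul_assoc, hNP i s, smul_smul]
  have hPA2 : ∀ s, Pm s * A2 = A2 * Pm s := by
    intro s
    have hcom : Commute A2 (Pm s) := by
      simp only [hA2def, hPmdef]
      apply Commute.sum_left
      intro i _
      apply Commute.smul_left
      apply Commute.list_prod_right
      intro x hx
      obtain ⟨j', _, rfl⟩ := List.mem_map.mp hx
      apply Commute.smul_right
      exact Commute.add_right (Commute.one_right _) (Commute.smul_right (hNcomm i j') _)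
    exact hcom.eq.symm
  clear_value Pm
  have hcinj : Function.Injective cs := by
    intro s s' h
    have key : ∀ t : Fin m → Bool, cs t
        = 2 * (((∑ i : Fin m, if t i then 3^(i:ℕ) else 0 : ℕ)) : ℝ) - ∑ i : Fin m, (3:ℝ)^(i:ℕ) := by
      intro t
      simp only [hcsdef]
      push_cast
      rw [Finset.mul_sum, ← Finset.sum_sub_distrib]
      refine Finset.sum_congr rfl fun i _ => ?_
      cases ht : t i <;> simp [hsgndef, ht] <;> ring
    rw [key s, key s'] at h
    have h2 : (((∑ i : Fin m, if s i then 3^(i:ℕ) else 0 : ℕ)) : ℝ)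
        = (((∑ i : Fin m, if s' i then 3^(i:ℕ) else 0 : ℕ)) : ℝ) := by linarith
    exact aux_nu_inj m s s' (by exact_mod_cast h2)
  have hQrow : ∀ k, (fun t => Q k t) ≠ 0 := by
    intro k h
    have h1 := congrFun (congrFun hQQ k) k
    rw [Matrix.mul_apply] at h1
    have hz : ∀ t, Q k t = 0 := fun t => congrFun h t
    simp only [Matrix.transpose_apply, hz, mul_zero, Finset.sum_const_zero,
      Matrix.one_apply_eq] at h1
    exact zero_ne_one h1
  have hsign : ∀ k : Fin p, ∃ s : Fin m → Bool,
      ∀ j, Nm j *ᵥ (fun t => Q k t) = sgn (s j) • (fun t => Q k t) := by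
    intro k
    have hv := hAv k
    have hvP : ∀ s, cs s ≠ μ2 k → Pm s *ᵥ (fun t => Q k t) = 0 := by
      intro s hne
      have h1 : A2 *ᵥ (Pm s *ᵥ (fun t => Q k t)) = cs s • (Pm s *ᵥ (fun t => Q k t)) := by
        rw [Matrix.mulVec_mulVec, hA2P s, Matrix.smul_mulVec]
      have h2 : A2 *ᵥ (Pm s *ᵥ (fun t => Q k t)) = μ2 k • (Pm s *ᵥ (fun t => Q k t)) := by
        rw [Matrix.mulVec_mulVec, ← hPA2 s, ← Matrix.mulVec_mulVec, hv, Matrix.mulVec_smul]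
      have h3 : (cs s - μ2 k) • (Pm s *ᵥ (fun t => Q k t)) = 0 := by
        rw [sub_smul, ← h1, ← h2, sub_self]
      rcases smul_eq_zero.mp h3 with h4 | h4
      · exact absurd (sub_eq_zero.mp h4) hne
      · exact h4
    have hvsum : ∑ s : Fin m → Bool, Pm s *ᵥ (fun t => Q k t) = (fun t => Q k t) := by
      rw [← aux_sum_mulVec, hPsum, Matrix.one_mulVec]
    by_cases hex : ∃ s, cs s = μ2 k
    · obtain ⟨s0, hs0⟩ := hex
      refine ⟨s0, fun j => ?_⟩
      have hvk : Pm s0 *ᵥ (fun t => Q k t) = (fun t => Q k t) := by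
        conv_rhs => rw [← hvsum]
        symm
        apply Finset.sum_eq_single s0
        · intro s _ hness
          apply hvP s
          intro hcontra
          exact hness (hcinj (hs0 ▸ hcontra))
        · intro hcontra; exact absurd (Finset.mem_univ s0) hcontra
      conv_lhs => rw [← hvk]
      rw [Matrix.mulVec_mulVec, hNP j s0, Matrix.smul_mulVec, hvk]
    · exfalso
      push_neg at hex
      apply hQrow k
      rw [← hvsum]
      exact Finset.sum_eq_zero fun s _ => hvP s (hex s)
  choose sfun hsfun using hsign
  set lam : Fin m → Fin p → ℝ := fun j k => sgn (sfun k j) with hlamdef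
  set κf : Fin (m+1) → Fin p → ℝ :=
    fun i k => Fin.cases 1 (fun j => lam j k) i with hκdef
  have hMQ : ∀ i, M i = Qᵀ * Matrix.diagonal (fun k => κf i k) * Q := by
    intro i
    induction i using Fin.cases with
    | zero =>
      have hd : Matrix.diagonal (fun k => κf 0 k) = 1 := by
        have : (fun k => κf 0 k) = fun _ => (1:ℝ) := by
          funext k; simp [hκdef]
        rw [this, Matrix.diagonal_one]
      rw [hM0, hd, mul_one, hQtQ]
    | succ j =>
      have hNQ : Nm j * Qᵀ = Qᵀ * Matrix.diagonal (fun k => lam j k) := by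
        ext t k2
        have h1 := congrFun (hsfun k2 j) t
        simp only [Matrix.mulVec, dotProduct, Pi.smul_apply, smul_eq_mul] at h1
        rw [Matrix.mul_apply, Matrix.mul_diagonal]
        simp only [Matrix.transpose_apply]
        rw [h1]
        simp [hlamdef, mul_comm]
      have hMN : M j.succ = Nm j := by rw [hNdef]
      have hκs : (fun k => κf j.succ k) = fun k => lam j k := by
        funext k; simp [hκdef]
      calc M j.succ = Nm j * (Qᵀ * Q) := by rw [hQtQ, Matrix.mul_one, hMN]
        _ = (Nm j * Qᵀ) * Q := (Matrix.mul_assoc _ _ _).symm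
        _ = (Qᵀ * Matrix.diagonal (fun k => lam j k)) * Q := by rw [hNQ]
        _ = Qᵀ * Matrix.diagonal (fun k => κf j.succ k) * Q := by rw [hκs]
  set W : Matrix (Fin p) (Fin n) ℝ := Q * U with hWdef
  have hblock : ∀ (i j : Fin (m+1)) (a b : Fin n),
      L (i, a) (j, b) = ∑ k, (κf i k * κf j k) * (W k a * W k b) := by
    intro i j a b
    rw [hL' i j a b]
    have h1 : (Y i)ᵀ * Y j = Wᵀ * (Matrix.diagonal (fun k => κf i k * κf j k) * W) := by
      rw [← hMU i, ← hMU j, Matrix.transpose_mul, hMsym i, hMQ i, hMQ j, hWdef,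
        Matrix.transpose_mul]
      simp only [Matrix.mul_assoc]
      rw [show Q * (Qᵀ * (Matrix.diagonal (fun k => κf j k) * (Q * U)))
          = Matrix.diagonal (fun k => κf j k) * (Q * U) from by
        rw [← Matrix.mul_assoc, hQQ, Matrix.one_mul]]
      rw [← Matrix.mul_assoc (Matrix.diagonal fun k => κf i k)
        (Matrix.diagonal fun k => κf j k), Matrix.diagonal_mul_diagonal]
    rw [h1, Matrix.mul_apply]
    refine Finset.sum_congr rfl fun k _ => ?_
    rw [Matrix.transpose_apply, Matrix.diagonal_mul]
    ring
  have hWrow : ∀ k, (fun a => W k a) ≠ 0 := by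
    intro k h
    apply hQrow k
    have hr : (fun t => Q k t) ᵥ* U = 0 := by
      funext a
      have := congrFun h a
      simpa [Matrix.vecMul, dotProduct, hWdef, Matrix.mul_apply] using this
    have h2 : (fun t => Q k t) ᵥ* G = 0 := by
      rw [hGdef, ← Matrix.vecMul_vecMul, hr, Matrix.zero_vecMul]
    have h3 : (fun t => Q k t) = ((fun t => Q k t) ᵥ* G) ᵥ* G⁻¹ := by
      rw [Matrix.vecMul_vecMul, hG1, Matrix.vecMul_one]
    rw [h2, Matrix.zero_vecMul] at h3
    exact h3
  set α : Fin p → ℝ := fun k => ∑ a, (W k a)^2 with hαdef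
  have hαpos : ∀ k, 0 < α k := by
    intro k
    obtain ⟨a, ha⟩ : ∃ a, W k a ≠ 0 := by
      by_contra hc; push_neg at hc; exact hWrow k (funext hc)
    exact Finset.sum_pos' (fun b _ => sq_nonneg _)
      ⟨a, Finset.mem_univ a, pow_two_pos_of_ne_zero ha⟩
  set u : Fin p → Fin n → ℝ := fun k a => (Real.sqrt (α k))⁻¹ * W k a with hudef
  refine ⟨α, lam, u, hαpos, ?_, ?_, ?_⟩
  · intro j k
    by_cases h : sfun k j
    · left; simp [hlamdef, hsgndef, h]
    · right; simp [hlamdef, hsgndef, h]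
  · intro k
    have hs2 : Real.sqrt (α k) ^ 2 = α k := Real.sq_sqrt (hαpos k).le
    calc ∑ a, u k a ^ 2 = (Real.sqrt (α k))⁻¹ ^ 2 * ∑ a, (W k a)^2 := by
          rw [Finset.mul_sum]
          refine Finset.sum_congr rfl fun a _ => ?_
          simp only [hudef]; ring
      _ = 1 := by
          rw [inv_pow, hs2]
          exact inv_mul_cancel₀ (hαpos k).ne'
  · ext q q'
    obtain ⟨i, a⟩ := q
    obtain ⟨j, b⟩ := q'
    rw [Matrix.sum_apply, hblock i j a b]
    refine Finset.sum_congr rfl fun k _ => ?_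
    rw [Matrix.smul_apply, Matrix.vecMulVec_apply]
    have hkk1 : (Fin.cases 1 (fun j' => lam j' k) i : ℝ) = κf i k := rfl
    have hkk2 : (Fin.cases 1 (fun j' => lam j' k) j : ℝ) = κf j k := rfl
    have hsq : Real.sqrt (α k) * Real.sqrt (α k) = α k := Real.mul_self_sqrt (hαpos k).le
    have hone : α k * ((Real.sqrt (α k))⁻¹ * (Real.sqrt (α k))⁻¹) = 1 := by
      rw [← mul_inv, hsq, mul_inv_cancel₀ (hαpos k).ne']
    simp only [hudef, smul_eq_mul, hkk1, hkk2]
    linear_combination (-(κf i k * κf j k * (W k a * W k b))) * hone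
end
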